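/- Let ν ∈ ℕ, ν ≥ 1, and let Ω, ω : ℝ^ν → ℝ be nonnegative functions of class C¹. Assume that at least one of the following holds: Ω(η) → ∞ as |η| → ∞, or ω(k) → ∞ as |k| → ∞. Then the set Θ = {(P, λ) ∈ ℝ^ν × ℝ : there exists k ∈ ℝ^ν with λ = Ω(P−k) + ω(k) and ∇Ω(P−k) = ∇ω(k)} is a closed subset of ℝ^{ν+1}. -/

import Mathlib

open Filter Topology

lemma grad_cont' {E : Type*} [NormedAddCommGroup E] [InnerProductSpace ℝ E] [CompleteSpace E]
    {f : E → ℝ} (hf : ContDiff ℝ 1 f) : Continuous (gradient f) := by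
  have h : gradient f = fun x => (InnerProductSpace.toDual ℝ E).symm (fderiv ℝ f x) := rfl
  rw [h]
  exact (InnerProductSpace.toDual ℝ E).symm.continuous.comp (hf.continuous_fderiv one_ne_zero)

/-- **Closedness of the threshold set `Θ` (part of Proposition 5.2).** Let `Ω, ω` be
nonnegative `C¹` dispersion relations, at least one of which tends to `∞` at infinity.
Then `Θ = {(P, λ) | ∃ k, λ = Ω(P−k) + ω(k) ∧ ∇Ω(P−k) = ∇ω(k)}` is closed in `ℝ^{ν+1}`. -/
theorem stmt_8 (ν : ℕ) (hν : 1 ≤ ν)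
    (Ω ω : EuclideanSpace ℝ (Fin ν) → ℝ)
    (hΩ : ContDiff ℝ 1 Ω) (hω : ContDiff ℝ 1 ω)
    (hΩ0 : ∀ η, 0 ≤ Ω η) (hω0 : ∀ k, 0 ≤ ω k)
    (hcoerc : Tendsto Ω (cocompact (EuclideanSpace ℝ (Fin ν))) atTop ∨
      Tendsto ω (cocompact (EuclideanSpace ℝ (Fin ν))) atTop) :
    IsClosed {p : EuclideanSpace ℝ (Fin ν) × ℝ |
      ∃ k : EuclideanSpace ℝ (Fin ν),
        p.2 = Ω (p.1 - k) + ω k ∧ gradient Ω (p.1 - k) = gradient ω k} := by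
  rw [← isSeqClosed_iff_isClosed]
  intro x p hx hlim
  choose k hk1 hk2 using hx
  have hx1 : Tendsto (fun n => (x n).1) atTop (𝓝 p.1) :=
    (continuous_fst.tendsto p).comp hlim
  have hx2 : Tendsto (fun n => (x n).2) atTop (𝓝 p.2) :=
    (continuous_snd.tendsto p).comp hlim
  obtain ⟨B, hB⟩ : ∃ B, ∀ n, (x n).2 ≤ B := by
    obtain ⟨B, hB⟩ := hx2.bddAbove_range
    exact ⟨B, fun n => hB ⟨n, rfl⟩⟩
  obtain ⟨φ, hφ, q, hq⟩ : ∃ φ : ℕ → ℕ, StrictMono φ ∧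
      ∃ q, Tendsto (fun n => k (φ n)) atTop (𝓝 q) := by
    rcases hcoerc with hc | hc
    · have hev : ∀ᶠ y in cocompact (EuclideanSpace ℝ (Fin ν)), B + 1 ≤ Ω y :=
        hc.eventually (eventually_ge_atTop (B + 1))
      obtain ⟨K, hK, hKs⟩ := mem_cocompact.mp hev
      have hmem : ∀ n, (x n).1 - k n ∈ K := by
        intro n
        by_contra h
        have h1 : B + 1 ≤ Ω ((x n).1 - k n) := hKs h
        have h2 : Ω ((x n).1 - k n) ≤ B := by
          have := hk1 n; have := hω0 (k n); have := hB n; linarith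
        linarith
      obtain ⟨q, hqK, φ, hφ, hconv⟩ := hK.tendsto_subseq hmem
      refine ⟨φ, hφ, p.1 - q, ?_⟩
      have : Tendsto (fun n => (x (φ n)).1 - ((x (φ n)).1 - k (φ n)))
          atTop (𝓝 (p.1 - q)) := (hx1.comp hφ.tendsto_atTop).sub hconv
      simpa using this
    · have hev : ∀ᶠ y in cocompact (EuclideanSpace ℝ (Fin ν)), B + 1 ≤ ω y :=
        hc.eventually (eventually_ge_atTop (B + 1))
      obtain ⟨K, hK, hKs⟩ := mem_cocompact.mp hev
      have hmem : ∀ n, k n ∈ K := by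
        intro n
        by_contra h
        have h1 : B + 1 ≤ ω (k n) := hKs h
        have h2 : ω (k n) ≤ B := by
          have := hk1 n; have := hΩ0 ((x n).1 - k n); have := hB n; linarith
        linarith
      obtain ⟨q, hqK, φ, hφ, hconv⟩ := hK.tendsto_subseq hmem
      exact ⟨φ, hφ, q, hconv⟩
  have hy : Tendsto (fun n => (x (φ n)).1 - k (φ n)) atTop (𝓝 (p.1 - q)) :=
    (hx1.comp hφ.tendsto_atTop).sub hq
  refine ⟨q, ?_, ?_⟩
  · have h2 : Tendsto (fun n => Ω ((x (φ n)).1 - k (φ n)) + ω (k (φ n))) atTop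
        (𝓝 (Ω (p.1 - q) + ω q)) :=
      ((hΩ.continuous.tendsto _).comp hy).add ((hω.continuous.tendsto _).comp hq)
    have h1 : Tendsto (fun n => (x (φ n)).2) atTop (𝓝 p.2) := hx2.comp hφ.tendsto_atTop
    have h3 : Tendsto (fun n => (x (φ n)).2) atTop (𝓝 (Ω (p.1 - q) + ω q)) := by
      simpa only [← hk1] using h2
    exact tendsto_nhds_unique h1 h3
  · have h2 : Tendsto (fun n => gradient Ω ((x (φ n)).1 - k (φ n))) atTop
        (𝓝 (gradient Ω (p.1 - q))) := ((grad_cont' hΩ).tendsto _).comp hy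
    have h3 : Tendsto (fun n => gradient ω (k (φ n))) atTop (𝓝 (gradient ω q)) :=
      ((grad_cont' hω).tendsto _).comp hq
    have h4 : Tendsto (fun n => gradient Ω ((x (φ n)).1 - k (φ n))) atTop
        (𝓝 (gradient ω q)) := by
      simpa only [hk2] using h3
    exact tendsto_nhds_unique h2 h4
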